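/- With Λ(D) = {x ∈ ℤ² : D₁ | L₁(x), D₂ | L₂(x), D₃ | Q(x)} and δ(D) the largest integer δ such that every x ∈ Λ(D) satisfies δ | gcd(x₁,x₂): if gcd(D₁,D₃) and gcd(D₂,D₃) are squarefree, then lcm of the three quantities gcd(D₁,D₃)/gcd(D₁,D₃,Δ₁₃), gcd(D₂,D₃)/gcd(D₂,D₃,Δ₂₃), gcd(D₁,D₂)/gcd(D₁,D₂,Δ₁₂) divides δ(D). -/

import Mathlib

/-- Key arithmetic lemma: if `g ∣ d * n` then `g / gcd g d ∣ n`. -/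
lemma key_div (g d : ℕ) (hg : 0 < g) (n : ℤ) (h : (g : ℤ) ∣ (d : ℤ) * n) :
    ((g / Nat.gcd g d : ℕ) : ℤ) ∣ n := by
  set G := Nat.gcd g d with hG
  have hG0 : 0 < G := Nat.gcd_pos_of_pos_left d hg
  have hge : G * (g / G) = g := Nat.mul_div_cancel' (Nat.gcd_dvd_left g d)
  have hde : G * (d / G) = d := Nat.mul_div_cancel' (Nat.gcd_dvd_right g d)
  have hcop : Nat.Coprime (g / G) (d / G) := Nat.coprime_div_gcd_div_gcd hG0
  have h2 : ((g / G : ℕ) : ℤ) ∣ ((d / G : ℕ) : ℤ) * n := by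
    rw [← hge, ← hde] at h
    push_cast at h
    rw [mul_assoc] at h
    exact (mul_dvd_mul_iff_left (by exact_mod_cast hG0.ne' : (G : ℤ) ≠ 0)).mp h
  have hcop' : IsCoprime ((g / G : ℕ) : ℤ) ((d / G : ℕ) : ℤ) := by
    rw [Int.isCoprime_iff_gcd_eq_one, Int.gcd_natCast_natCast]
    exact hcop
  exact hcop'.dvd_of_dvd_mul_left h2

theorem stmt14 (a₁ b₁ a₂ b₂ a₃ b₃ c₃ : ℤ) (D₁ D₂ D₃ : ℕ)
    (h₁ : 0 < D₁) (h₂ : 0 < D₂) (h₃ : 0 < D₃)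
    (hsf1 : Squarefree (Nat.gcd D₁ D₃)) (hsf2 : Squarefree (Nat.gcd D₂ D₃))
    (δD : ℕ)
    (hδ : IsGreatest {δ : ℕ | ∀ x : ℤ × ℤ,
        (D₁ : ℤ) ∣ a₁ * x.1 + b₁ * x.2 → (D₂ : ℤ) ∣ a₂ * x.1 + b₂ * x.2 →
        (D₃ : ℤ) ∣ a₃ * x.1 ^ 2 + b₃ * x.2 ^ 2 + c₃ * x.1 * x.2 →
        (δ : ℤ) ∣ x.1 ∧ (δ : ℤ) ∣ x.2} δD) :
    Nat.lcm (Nat.lcm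
        (Nat.gcd D₁ D₃ / Nat.gcd (Nat.gcd D₁ D₃) (a₃ * b₁ ^ 2 + b₃ * a₁ ^ 2 - c₃ * a₁ * b₁).natAbs)
        (Nat.gcd D₂ D₃ / Nat.gcd (Nat.gcd D₂ D₃) (a₃ * b₂ ^ 2 + b₃ * a₂ ^ 2 - c₃ * a₂ * b₂).natAbs))
        (Nat.gcd D₁ D₂ / Nat.gcd (Nat.gcd D₁ D₂) (a₁ * b₂ - a₂ * b₁).natAbs)
      ∣ δD := by
  set S := {δ : ℕ | ∀ x : ℤ × ℤ,
        (D₁ : ℤ) ∣ a₁ * x.1 + b₁ * x.2 → (D₂ : ℤ) ∣ a₂ * x.1 + b₂ * x.2 →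
        (D₃ : ℤ) ∣ a₃ * x.1 ^ 2 + b₃ * x.2 ^ 2 + c₃ * x.1 * x.2 →
        (δ : ℤ) ∣ x.1 ∧ (δ : ℤ) ∣ x.2} with hS
  -- Any element of S divides δD
  have hdvdδ : ∀ c : ℕ, c ∈ S → c ∣ δD := by
    intro c hc
    have hl : Nat.lcm δD c ∈ S := by
      intro x hx1 hx2 hx3
      obtain ⟨hd1, hd2⟩ := hδ.1 x hx1 hx2 hx3
      obtain ⟨hc1, hc2⟩ := hc x hx1 hx2 hx3
      constructor
      · exact Int.natCast_dvd.mpr (Nat.lcm_dvd (Int.natCast_dvd.mp hd1) (Int.natCast_dvd.mp hc1))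
      · exact Int.natCast_dvd.mpr (Nat.lcm_dvd (Int.natCast_dvd.mp hd2) (Int.natCast_dvd.mp hc2))
    have hle : Nat.lcm δD c ≤ δD := hδ.2 hl
    rcases Nat.eq_zero_or_pos δD with h0 | hpos
    · simp [h0]
    rcases Nat.eq_zero_or_pos c with hc0 | hcpos
    · -- c = 0 ∈ S means all solutions are 0, so δD + 1 ∈ S, contradiction
      exfalso
      subst hc0
      have : δD + 1 ∈ S := by
        intro x hx1 hx2 hx3
        obtain ⟨hc1, hc2⟩ := hc x hx1 hx2 hx3
        simp only [Nat.cast_zero, zero_dvd_iff] at hc1 hc2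
        simp [hc1, hc2]
      have := hδ.2 this
      omega
    · have hlpos : 0 < Nat.lcm δD c := Nat.pos_of_ne_zero (Nat.lcm_ne_zero hpos.ne' hcpos.ne')
      have hdl : δD ∣ Nat.lcm δD c := Nat.dvd_lcm_left _ _
      have : Nat.lcm δD c = δD := Nat.le_antisymm hle (Nat.le_of_dvd hlpos hdl)
      exact this ▸ Nat.dvd_lcm_right _ _
  -- membership of the three quantities
  have mem1 : (Nat.gcd D₁ D₃ /
      Nat.gcd (Nat.gcd D₁ D₃) (a₃ * b₁ ^ 2 + b₃ * a₁ ^ 2 - c₃ * a₁ * b₁).natAbs) ∈ S := by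
    intro x hx1 hx2 hx3
    set g := Nat.gcd D₁ D₃ with hg
    have hgpos : 0 < g := Nat.gcd_pos_of_pos_left D₃ h₁
    set Δ := a₃ * b₁ ^ 2 + b₃ * a₁ ^ 2 - c₃ * a₁ * b₁ with hΔ
    have hgL : (g : ℤ) ∣ a₁ * x.1 + b₁ * x.2 :=
      dvd_trans (Int.natCast_dvd_natCast.mpr (Nat.gcd_dvd_left _ _)) hx1
    have hgQ : (g : ℤ) ∣ a₃ * x.1 ^ 2 + b₃ * x.2 ^ 2 + c₃ * x.1 * x.2 :=
      dvd_trans (Int.natCast_dvd_natCast.mpr (Nat.gcd_dvd_right _ _)) hx3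
    have hdvd1 : (g : ℤ) ∣ Δ * x.1 ^ 2 := by
      have h := dvd_sub (hgQ.mul_left (b₁ ^ 2))
        (hgL.mul_left (b₃ * (b₁ * x.2 - a₁ * x.1) + c₃ * b₁ * x.1))
      convert h using 1 <;> first | rfl | (rw [hΔ]; ring)
    have hdvd2 : (g : ℤ) ∣ Δ * x.2 ^ 2 := by
      have h := dvd_sub (hgQ.mul_left (a₁ ^ 2))
        (hgL.mul_left (a₃ * (a₁ * x.1 - b₁ * x.2) + c₃ * a₁ * x.2))
      convert h using 1 <;> first | rfl | (rw [hΔ]; ring)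
    set e := g / Nat.gcd g Δ.natAbs with he
    have hesf : Squarefree e := hsf1.squarefree_of_dvd (Nat.div_dvd_of_dvd (Nat.gcd_dvd_left _ _))
    have hesfZ : Squarefree (e : ℤ) := Int.squarefree_natCast.mpr hesf
    have hnd : ((Δ.natAbs : ℤ)) = Δ ∨ ((Δ.natAbs : ℤ)) = -Δ := by
      rcases Int.natAbs_eq Δ with h | h
      · left; omega
      · right; omega
    have key1 : (e : ℤ) ∣ x.1 ^ 2 := by
      refine key_div g Δ.natAbs hgpos _ ?_
      rcases hnd with h | h <;> rw [h]
      · exact hdvd1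
      · simpa using hdvd1.neg_right
    have key2 : (e : ℤ) ∣ x.2 ^ 2 := by
      refine key_div g Δ.natAbs hgpos _ ?_
      rcases hnd with h | h <;> rw [h]
      · exact hdvd2
      · simpa using hdvd2.neg_right
    exact ⟨(hesfZ.dvd_pow_iff_dvd two_ne_zero).mp key1,
      (hesfZ.dvd_pow_iff_dvd two_ne_zero).mp key2⟩
  have mem2 : (Nat.gcd D₂ D₃ /
      Nat.gcd (Nat.gcd D₂ D₃) (a₃ * b₂ ^ 2 + b₃ * a₂ ^ 2 - c₃ * a₂ * b₂).natAbs) ∈ S := by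
    intro x hx1 hx2 hx3
    set g := Nat.gcd D₂ D₃ with hg
    have hgpos : 0 < g := Nat.gcd_pos_of_pos_left D₃ h₂
    set Δ := a₃ * b₂ ^ 2 + b₃ * a₂ ^ 2 - c₃ * a₂ * b₂ with hΔ
    have hgL : (g : ℤ) ∣ a₂ * x.1 + b₂ * x.2 :=
      dvd_trans (Int.natCast_dvd_natCast.mpr (Nat.gcd_dvd_left _ _)) hx2
    have hgQ : (g : ℤ) ∣ a₃ * x.1 ^ 2 + b₃ * x.2 ^ 2 + c₃ * x.1 * x.2 :=
      dvd_trans (Int.natCast_dvd_natCast.mpr (Nat.gcd_dvd_right _ _)) hx3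
    have hdvd1 : (g : ℤ) ∣ Δ * x.1 ^ 2 := by
      have h := dvd_sub (hgQ.mul_left (b₂ ^ 2))
        (hgL.mul_left (b₃ * (b₂ * x.2 - a₂ * x.1) + c₃ * b₂ * x.1))
      convert h using 1 <;> first | rfl | (rw [hΔ]; ring)
    have hdvd2 : (g : ℤ) ∣ Δ * x.2 ^ 2 := by
      have h := dvd_sub (hgQ.mul_left (a₂ ^ 2))
        (hgL.mul_left (a₃ * (a₂ * x.1 - b₂ * x.2) + c₃ * a₂ * x.2))
      convert h using 1 <;> first | rfl | (rw [hΔ]; ring)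
    set e := g / Nat.gcd g Δ.natAbs with he
    have hesf : Squarefree e := hsf2.squarefree_of_dvd (Nat.div_dvd_of_dvd (Nat.gcd_dvd_left _ _))
    have hesfZ : Squarefree (e : ℤ) := Int.squarefree_natCast.mpr hesf
    have hnd : ((Δ.natAbs : ℤ)) = Δ ∨ ((Δ.natAbs : ℤ)) = -Δ := by
      rcases Int.natAbs_eq Δ with h | h
      · left; omega
      · right; omega
    have key1 : (e : ℤ) ∣ x.1 ^ 2 := by
      refine key_div g Δ.natAbs hgpos _ ?_
      rcases hnd with h | h <;> rw [h]
      · exact hdvd1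
      · simpa using hdvd1.neg_right
    have key2 : (e : ℤ) ∣ x.2 ^ 2 := by
      refine key_div g Δ.natAbs hgpos _ ?_
      rcases hnd with h | h <;> rw [h]
      · exact hdvd2
      · simpa using hdvd2.neg_right
    exact ⟨(hesfZ.dvd_pow_iff_dvd two_ne_zero).mp key1,
      (hesfZ.dvd_pow_iff_dvd two_ne_zero).mp key2⟩
  have mem3 : (Nat.gcd D₁ D₂ / Nat.gcd (Nat.gcd D₁ D₂) (a₁ * b₂ - a₂ * b₁).natAbs) ∈ S := by
    intro x hx1 hx2 hx3
    set g := Nat.gcd D₁ D₂ with hg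
    have hgpos : 0 < g := Nat.gcd_pos_of_pos_left D₂ h₁
    set Δ := a₁ * b₂ - a₂ * b₁ with hΔ
    have hgL1 : (g : ℤ) ∣ a₁ * x.1 + b₁ * x.2 :=
      dvd_trans (Int.natCast_dvd_natCast.mpr (Nat.gcd_dvd_left _ _)) hx1
    have hgL2 : (g : ℤ) ∣ a₂ * x.1 + b₂ * x.2 :=
      dvd_trans (Int.natCast_dvd_natCast.mpr (Nat.gcd_dvd_right _ _)) hx2
    have hdvd1 : (g : ℤ) ∣ Δ * x.1 := by
      have h := dvd_sub (hgL1.mul_left b₂) (hgL2.mul_left b₁)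
      convert h using 1 <;> first | rfl | (rw [hΔ]; ring)
    have hdvd2 : (g : ℤ) ∣ Δ * x.2 := by
      have h := dvd_sub (hgL2.mul_left a₁) (hgL1.mul_left a₂)
      convert h using 1 <;> first | rfl | (rw [hΔ]; ring)
    have hnd : ((Δ.natAbs : ℤ)) = Δ ∨ ((Δ.natAbs : ℤ)) = -Δ := by
      rcases Int.natAbs_eq Δ with h | h
      · left; omega
      · right; omega
    constructor
    · refine key_div g Δ.natAbs hgpos _ ?_
      rcases hnd with h | h <;> rw [h]
      · exact hdvd1
      · simpa using hdvd1.neg_right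
    · refine key_div g Δ.natAbs hgpos _ ?_
      rcases hnd with h | h <;> rw [h]
      · exact hdvd2
      · simpa using hdvd2.neg_right
  -- combine: lcm of members is a member
  have hlcm : ∀ c d : ℕ, c ∈ S → d ∈ S → Nat.lcm c d ∈ S := by
    intro c d hc hd x hx1 hx2 hx3
    obtain ⟨hc1, hc2⟩ := hc x hx1 hx2 hx3
    obtain ⟨hd1, hd2⟩ := hd x hx1 hx2 hx3
    constructor
    · exact Int.natCast_dvd.mpr (Nat.lcm_dvd (Int.natCast_dvd.mp hc1) (Int.natCast_dvd.mp hd1))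
    · exact Int.natCast_dvd.mpr (Nat.lcm_dvd (Int.natCast_dvd.mp hc2) (Int.natCast_dvd.mp hd2))
  exact hdvdδ _ (hlcm _ _ (hlcm _ _ mem1 mem2) mem3)
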